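/- For all integers n ≥ k ≥ 0, the absolute value |v(n,k)|, where v(n,k) = 4^{n−k}·t(2n+1, 2k+1), equals the number of (n,k)-Riordan complexes, i.e., the number of ways to choose a set partition {B_1,…,B_{2k+1}} of {1,…,2n+1} into 2k+1 blocks each of odd cardinality together with, for each block B_j, an ordered pair (σ_j, τ_j) of fixed-point-free involutions on B_j \ {max(B_j)}. -/

import Mathlib

open Polynomial

/-- The numbers `v n k = 4^(n-k) * t (2n+1) (2k+1)`, where `t` are the central factorial
numbers of the first kind. -/
def v : ℕ → ℕ → ℤ
  | 0, 0 => 1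
  | 0, _ + 1 => 0
  | n + 1, 0 => -(2 * (n : ℤ) + 1) ^ 2 * v n 0
  | n + 1, k + 1 => v n k - (2 * (n : ℤ) + 1) ^ 2 * v n (k + 1)

open Finset Equiv
open scoped Nat PowerSeries

section Aux

variable {α : Type*} [Fintype α] [DecidableEq α]

/-- number of fixed-point-free involutions with support exactly `S`. -/
noncomputable def invc (S : Finset α) : ℕ :=
  Nat.card {f : Equiv.Perm α // f * f = 1 ∧ ∀ x, f x ≠ x ↔ x ∈ S}

lemma invc_eq_fintype (S : Finset α) :
    invc S = Fintype.card {f : Equiv.Perm α // f * f = 1 ∧ ∀ x, f x ≠ x ↔ x ∈ S} :=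
  Nat.card_eq_fintype_card

omit [Fintype α] [DecidableEq α] in
lemma perm_invol_apply {f : Equiv.Perm α} (h : f * f = 1) (x : α) : f (f x) = x := by
  have := congrArg (fun g : Equiv.Perm α => g x) h
  simpa using this

lemma invStepA {S : Finset α} {y z : α} (hz : z ∈ S.erase y) {f : Equiv.Perm α}
    (hf1 : f * f = 1) (hf2 : ∀ x, f x ≠ x ↔ x ∈ S) (hfy : f y = z) :
    (f * Equiv.swap y z) * (f * Equiv.swap y z) = 1 ∧
      ∀ x, (f * Equiv.swap y z) x ≠ x ↔ x ∈ (S.erase y).erase z := by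
  have hinv := perm_invol_apply hf1
  have hyz : y ≠ z := fun h => (mem_erase.1 hz).1 h.symm
  have hfz : f z = y := by rw [← hfy, hinv]
  have hgy : (f * Equiv.swap y z) y = y := by
    simp [Equiv.swap_apply_left, hfz]
  have hgz : (f * Equiv.swap y z) z = z := by
    simp [Equiv.swap_apply_right, hfy]
  have hgx : ∀ x, x ≠ y → x ≠ z → (f * Equiv.swap y z) x = f x := by
    intro x h1 h2
    simp [Equiv.swap_apply_of_ne_of_ne h1 h2]
  constructor
  · refine Equiv.ext fun x => ?_
    show (f * Equiv.swap y z) ((f * Equiv.swap y z) x) = x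
    rcases eq_or_ne x y with rfl | hxy
    · rw [hgy, hgy]
    rcases eq_or_ne x z with rfl | hxz
    · rw [hgz, hgz]
    · have h1 : f x ≠ y := fun h => hxz (by rw [← hfy, ← h, hinv])
      have h2 : f x ≠ z := fun h => hxy (by rw [← hfz, ← h, hinv])
      rw [hgx x hxy hxz, hgx _ h1 h2, hinv]
  · intro x
    rcases eq_or_ne x y with rfl | hxy
    · simp [hgy, mem_erase]
    rcases eq_or_ne x z with rfl | hxz
    · simp [hgz, mem_erase]
    · rw [hgx x hxy hxz, hf2 x, mem_erase, mem_erase]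
      tauto

lemma invStepB {S : Finset α} {y z : α} (hy : y ∈ S) (hz : z ∈ S.erase y) {g : Equiv.Perm α}
    (hg1 : g * g = 1) (hg2 : ∀ x, g x ≠ x ↔ x ∈ (S.erase y).erase z) :
    ((g * Equiv.swap y z) * (g * Equiv.swap y z) = 1 ∧
      ∀ x, (g * Equiv.swap y z) x ≠ x ↔ x ∈ S) ∧ (g * Equiv.swap y z) y = z := by
  have hinv := perm_invol_apply hg1
  have hyz : y ≠ z := fun h => (mem_erase.1 hz).1 h.symm
  have hgy : g y = y := by
    by_contra h
    have := (hg2 y).1 h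
    simp at this
  have hgz : g z = z := by
    by_contra h
    have := (hg2 z).1 h
    simp at this
  have hfy : (g * Equiv.swap y z) y = z := by simp [Equiv.swap_apply_left, hgz]
  have hfz : (g * Equiv.swap y z) z = y := by simp [Equiv.swap_apply_right, hgy]
  have hfx : ∀ x, x ≠ y → x ≠ z → (g * Equiv.swap y z) x = g x := by
    intro x h1 h2
    simp [Equiv.swap_apply_of_ne_of_ne h1 h2]
  refine ⟨⟨?_, ?_⟩, hfy⟩
  · refine Equiv.ext fun x => ?_
    show (g * Equiv.swap y z) ((g * Equiv.swap y z) x) = x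
    rcases eq_or_ne x y with rfl | hxy
    · rw [hfy, hfz]
    rcases eq_or_ne x z with rfl | hxz
    · rw [hfz, hfy]
    · have h1 : g x ≠ y := by
        intro h; apply hxy; rw [← hgy, ← h, hinv]
      have h2 : g x ≠ z := by
        intro h; apply hxz; rw [← hgz, ← h, hinv]
      rw [hfx x hxy hxz, hfx _ h1 h2, hinv]
  · intro x
    rcases eq_or_ne x y with rfl | hxy
    · rw [hfy]
      simp only [ne_eq, hyz.symm, not_false_eq_true, true_iff]
      exact hy
    rcases eq_or_ne x z with rfl | hxz
    · rw [hfz]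
      simp only [ne_eq, hyz, not_false_eq_true, true_iff]
      exact mem_of_mem_erase hz
    · rw [hfx x hxy hxz, hg2 x, mem_erase, mem_erase]
      tauto

/-- the per-z bijection -/
def invStep {S : Finset α} {y z : α} (hy : y ∈ S) (hz : z ∈ S.erase y) :
    {f : Equiv.Perm α // (f * f = 1 ∧ ∀ x, f x ≠ x ↔ x ∈ S) ∧ f y = z} ≃
      {g : Equiv.Perm α // g * g = 1 ∧ ∀ x, g x ≠ x ↔ x ∈ (S.erase y).erase z} where
  toFun f := ⟨f.1 * Equiv.swap y z, invStepA hz f.2.1.1 f.2.1.2 f.2.2⟩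
  invFun g := ⟨g.1 * Equiv.swap y z, invStepB hy hz g.2.1 g.2.2⟩
  left_inv f := by
    apply Subtype.ext
    show f.1 * Equiv.swap y z * Equiv.swap y z = f.1
    rw [mul_assoc, Equiv.swap_mul_self, mul_one]
  right_inv g := by
    apply Subtype.ext
    show g.1 * Equiv.swap y z * Equiv.swap y z = g.1
    rw [mul_assoc, Equiv.swap_mul_self, mul_one]

lemma invc_rec (S : Finset α) {y : α} (hy : y ∈ S) :
    invc S = ∑ z ∈ S.erase y, invc ((S.erase y).erase z) := by
  classical
  rw [invc_eq_fintype, Fintype.card_subtype]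
  have hmaps : ∀ f ∈ univ.filter
      (fun f : Equiv.Perm α => f * f = 1 ∧ ∀ x, f x ≠ x ↔ x ∈ S), f y ∈ S.erase y := by
    intro f hf
    simp only [mem_filter, mem_univ, true_and] at hf
    obtain ⟨hf1, hf2⟩ := hf
    have hfy : f y ≠ y := by
      intro h
      have h2 : ¬ (y ∈ S) := by
        rw [← hf2 y]
        simp [h]
      exact h2 hy
    refine mem_erase.2 ⟨hfy, ?_⟩
    rw [← hf2 (f y)]
    intro h
    exact hfy (h.symm.trans (perm_invol_apply hf1 y))
  rw [Finset.card_eq_sum_card_fiberwise hmaps]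
  refine Finset.sum_congr rfl fun z hz => ?_
  rw [Finset.filter_filter]
  have e1 : (univ.filter fun f : Equiv.Perm α =>
      (f * f = 1 ∧ ∀ x, f x ≠ x ↔ x ∈ S) ∧ f y = z).card
      = Fintype.card {f : Equiv.Perm α // (f * f = 1 ∧ ∀ x, f x ≠ x ↔ x ∈ S) ∧ f y = z} :=
    (Fintype.card_subtype _).symm
  rw [e1, Fintype.card_congr (invStep hy hz), ← invc_eq_fintype]

lemma invc_empty : invc (∅ : Finset α) = 1 := by
  rw [invc_eq_fintype, Fintype.card_eq_one_iff]
  refine ⟨⟨1, by simp, by simp⟩, fun f => Subtype.ext (Equiv.ext fun x => ?_)⟩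
  by_contra h
  have := (f.2.2 x).1 h
  simp at this

lemma invc_formula : ∀ (m : ℕ) (S : Finset α), S.card = m →
    invc S = if Even m then (m - 1)‼ else 0 := by
  intro m
  induction m using Nat.strong_induction_on with
  | _ m IH =>
    intro S hS
    rcases Nat.eq_zero_or_pos m with rfl | hm
    · rw [Finset.card_eq_zero] at hS
      subst hS
      simpa using invc_empty
    · have hne : S.Nonempty := Finset.card_pos.1 (hS ▸ hm)
      obtain ⟨y, hy⟩ := hne
      rw [invc_rec S hy]
      have hcard : (S.erase y).card = m - 1 := by rw [Finset.card_erase_of_mem hy, hS]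
      have hterm : ∀ z ∈ S.erase y,
          invc ((S.erase y).erase z) = if Even (m - 2) then (m - 2 - 1)‼ else 0 := by
        intro z hz
        refine IH (m - 2) (by omega) _ ?_
        rw [Finset.card_erase_of_mem hz, hcard]
        omega
      rw [Finset.sum_congr rfl hterm, Finset.sum_const, hcard, smul_eq_mul]
      rcases Nat.even_or_odd m with he | ho
      · have hm2 : Even (m - 2) := by
          obtain ⟨r, hr⟩ := he; exact ⟨r - 1, by omega⟩
        rw [if_pos hm2, if_pos he]
        have h2 : 2 ≤ m := by
          rcases he with ⟨r, hr⟩; omega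
        have h3 : m - 1 = (m - 2) + 1 := by omega
        rw [h3, Nat.doubleFactorial_add_one]
      · have hm2 : ¬ Even (m - 2) ∨ m = 1 := by
          rcases Nat.eq_or_lt_of_le hm with h1 | h1
          · right; omega
          · left
            intro he2
            rw [Nat.even_sub (by omega)] at he2
            exact (Nat.not_even_iff_odd.2 ho) (he2.2 (by decide))
        rw [if_neg (Nat.not_even_iff_odd.2 ho)]
        rcases hm2 with h | h
        · rw [if_neg h, mul_zero]
        · subst h
          simp

section Gpart

variable [LinearOrder α]

/-- the non-maximal elements of a finset -/
def noMax (B : Finset α) : Finset α := B.filter (fun x => (x : WithBot α) ≠ B.max)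

lemma noMax_of_nonempty {B : Finset α} (hB : B.Nonempty) :
    noMax B = B.erase (B.max' hB) := by
  ext x
  rw [noMax, mem_filter, mem_erase, ← Finset.coe_max' hB, and_comm]
  simp [WithBot.coe_inj]

lemma card_noMax {B : Finset α} (hB : B.Nonempty) : (noMax B).card = B.card - 1 := by
  rw [noMax_of_nonempty hB, Finset.card_erase_of_mem (B.max'_mem hB)]

/-- block weight -/
noncomputable def wB (B : Finset α) : ℕ := (invc (noMax B)) ^ 2

def fodd (s : ℕ) : ℕ := if Odd s then ((s - 2)‼)^2 else 0

lemma wB_eq_fodd {B : Finset α} (hB : B.Nonempty) : wB B = fodd B.card := by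
  have hc : 1 ≤ B.card := Finset.card_pos.2 hB
  rw [wB, invc_formula (noMax B).card _ rfl, card_noMax hB, fodd]
  have hpar : Even (B.card - 1) ↔ Odd B.card := by
    rw [Nat.even_sub hc, Nat.even_iff, Nat.even_iff, Nat.odd_iff]
    omega
  by_cases h : Odd B.card
  · rw [if_pos (hpar.2 h), if_pos h, show #B - 1 - 1 = #B - 2 from by omega]
  · rw [if_neg (fun he => h (hpar.1 he)), if_neg h]
    norm_num

noncomputable def gpart (s : Finset α) (j : ℕ) : ℕ :=
  ∑ P : Finpartition s, if P.parts.card = j then ∏ B ∈ P.parts, wB B else 0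

lemma finpartition_empty_eq (P : Finpartition (∅ : Finset α)) (Q : Finpartition (∅ : Finset α)) :
    P = Q := by
  apply Finpartition.ext
  rw [Finpartition.parts_eq_empty_iff.2 rfl, Finpartition.parts_eq_empty_iff.2 rfl]

lemma gpart_empty (j : ℕ) : gpart (∅ : Finset α) j = if j = 0 then 1 else 0 := by
  haveI : Unique (Finpartition (∅ : Finset α)) :=
    { default := Finpartition.empty _, uniq := fun P => finpartition_empty_eq P _ }
  rw [gpart, Fintype.sum_unique]
  have hparts : (default : Finpartition (∅ : Finset α)).parts = ∅ :=
    Finpartition.parts_eq_empty_iff.2 rfl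
  rw [hparts]
  simp [eq_comm]

lemma gpart_zero {s : Finset α} (hs : s.Nonempty) : gpart s 0 = 0 := by
  rw [gpart]
  refine Finset.sum_eq_zero fun P _ => ?_
  rw [if_neg]
  intro h
  rw [Finset.card_eq_zero, Finpartition.parts_eq_empty_iff] at h
  rw [h] at hs
  simp at hs

lemma part_not_mem_sdiff {s B : Finset α} {x : α} (hxB : x ∈ B)
    (Q : Finpartition (s \ B)) : B ∉ Q.parts := by
  intro hmem
  have h1 : B ⊆ s \ B := Q.le hmem
  have := h1 hxB
  simp [hxB] at this

lemma sup_erase_eq {s B : Finset α} (P : Finpartition s) (hBp : B ∈ P.parts) :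
    (P.parts.erase B).sup id = s \ B := by
  have hdisj : Disjoint B ((P.parts.erase B).sup id) :=
    Finset.supIndep_iff_disjoint_erase.1 P.supIndep B hBp
  have hsup : B ⊔ (P.parts.erase B).sup id = s := by
    have h2 : (insert B (P.parts.erase B)).sup id = id B ⊔ (P.parts.erase B).sup id :=
      Finset.sup_insert
    rw [Finset.insert_erase hBp, P.sup_parts] at h2
    exact h2.symm
  simp only [sup_eq_union] at hsup
  conv_rhs => rw [← hsup]
  exact (Finset.union_sdiff_cancel_left hdisj).symm

/-- restriction of a finpartition by removing one part -/
noncomputable def restrictPartition {s B : Finset α} (P : Finpartition s) (hBp : B ∈ P.parts) :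
    Finpartition (s \ B) :=
  P.ofSubset (Finset.erase_subset _ _) (sup_erase_eq P hBp)

lemma restrictPartition_parts {s B : Finset α} (P : Finpartition s) (hBp : B ∈ P.parts) :
    (restrictPartition P hBp).parts = P.parts.erase B := rfl

/-- extension of a finpartition by adding one part -/
noncomputable def extendPartition {s B : Finset α} {x : α} (hB : B ⊆ s) (hxB : x ∈ B)
    (Q : Finpartition (s \ B)) : Finpartition s :=
  Q.extend (b := B) (by rw [Finset.bot_eq_empty]; exact Finset.ne_empty_of_mem hxB)
    disjoint_sdiff_self_left (by rw [sup_eq_union]; exact Finset.sdiff_union_of_subset hB)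

lemma extendPartition_parts {s B : Finset α} {x : α} (hB : B ⊆ s) (hxB : x ∈ B)
    (Q : Finpartition (s \ B)) :
    (extendPartition hB hxB Q).parts = insert B Q.parts := rfl

/-- restriction equivalence -/
noncomputable def partEquiv (s B : Finset α) (x : α) (hxs : x ∈ s) (hB : B ⊆ s) (hxB : x ∈ B) :
    {P : Finpartition s // P.part x = B} ≃ Finpartition (s \ B) where
  toFun P := restrictPartition P.1 (by have h := (P.1.part_mem.2 hxs); rwa [P.2] at h)
  invFun Q := ⟨extendPartition hB hxB Q, by
    refine Finpartition.part_eq_of_mem _ ?_ hxB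
    rw [extendPartition_parts]
    exact Finset.mem_insert_self _ _⟩
  left_inv P := by
    apply Subtype.ext
    apply Finpartition.ext
    have hBp : B ∈ P.1.parts := by have h := (P.1.part_mem.2 hxs); rwa [P.2] at h
    rw [extendPartition_parts, restrictPartition_parts, Finset.insert_erase hBp]
  right_inv Q := by
    apply Finpartition.ext
    rw [restrictPartition_parts, extendPartition_parts,
      Finset.erase_insert (part_not_mem_sdiff hxB Q)]

lemma partEquiv_parts {s B : Finset α} {x : α} (hxs : x ∈ s) (hB : B ⊆ s) (hxB : x ∈ B)
    (P : {P : Finpartition s // P.part x = B}) :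
    ((partEquiv s B x hxs hB hxB) P).parts = P.1.parts.erase B := rfl

lemma gpart_rec (s : Finset α) (hs : s.Nonempty) (j : ℕ) :
    gpart s (j + 1)
      = ∑ B ∈ s.powerset.filter (fun B => s.max' hs ∈ B), wB B * gpart (s \ B) j := by
  classical
  set x := s.max' hs with hx
  have hxs : x ∈ s := s.max'_mem hs
  rw [gpart]
  have hmaps : ∀ P ∈ (Finset.univ : Finset (Finpartition s)),
      P.part x ∈ s.powerset.filter (fun B => x ∈ B) := by
    intro P _
    rw [Finset.mem_filter, Finset.mem_powerset]
    exact ⟨P.le (P.part_mem.2 hxs), P.mem_part hxs⟩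
  rw [← Finset.sum_fiberwise_of_maps_to hmaps
    (fun P => if P.parts.card = j + 1 then ∏ B ∈ P.parts, wB B else 0)]
  refine Finset.sum_congr rfl fun B hB => ?_
  rw [Finset.mem_filter, Finset.mem_powerset] at hB
  obtain ⟨hBs, hxB⟩ := hB
  rw [Finset.sum_subtype (p := fun P : Finpartition s => P.part x = B)
    (univ.filter (fun P : Finpartition s => P.part x = B))
    (by simp) (fun P => if P.parts.card = j + 1 then ∏ B ∈ P.parts, wB B else 0)]
  rw [Fintype.sum_equiv (partEquiv s B x hxs hBs hxB)
    (fun P => if P.1.parts.card = j + 1 then ∏ B' ∈ P.1.parts, wB B' else 0)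
    (fun Q => wB B * if Q.parts.card = j then ∏ B' ∈ Q.parts, wB B' else 0) ?_]
  · rw [gpart, Finset.mul_sum]
  · intro P
    have hBp : B ∈ P.1.parts := by have h := (P.1.part_mem.2 hxs); rwa [P.2] at h
    rw [partEquiv_parts hxs hBs hxB P, Finset.card_erase_of_mem hBp]
    have hcp : 1 ≤ P.1.parts.card := Finset.card_pos.2 ⟨B, hBp⟩
    by_cases hc : P.1.parts.card = j + 1
    · rw [if_pos hc, if_pos (by omega), (Finset.mul_prod_erase _ _ hBp).symm]
    · rw [if_neg hc, if_neg (by omega), mul_zero]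

lemma count_sets {s : Finset α} {x : α} (hxs : x ∈ s) (t : ℕ) :
    ((s.powerset.filter (fun B => x ∈ B)).filter (fun B => B.card = t + 1)).card
      = (s.card - 1).choose t := by
  classical
  rw [← Finset.card_erase_of_mem hxs, ← Finset.card_powersetCard]
  refine Finset.card_bij' (fun B _ => B.erase x) (fun C _ => insert x C) ?_ ?_ ?_ ?_
  · intro B hB
    simp only [Finset.mem_filter, Finset.mem_powerset] at hB
    rw [Finset.mem_powersetCard]
    constructor
    · exact fun a ha => Finset.mem_erase.2
        ⟨(Finset.mem_erase.1 ha).1, hB.1.1 (Finset.mem_erase.1 ha).2⟩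
    · rw [Finset.card_erase_of_mem hB.1.2, hB.2]
      omega
  · intro C hC
    rw [Finset.mem_powersetCard] at hC
    have hxC : x ∉ C := fun h => (Finset.mem_erase.1 (hC.1 h)).1 rfl
    simp only [Finset.mem_filter, Finset.mem_powerset]
    refine ⟨⟨?_, Finset.mem_insert_self _ _⟩, ?_⟩
    · intro a ha
      rcases Finset.mem_insert.1 ha with rfl | ha'
      · exact hxs
      · exact Finset.mem_of_mem_erase (hC.1 ha')
    · rw [Finset.card_insert_of_notMem hxC, hC.2]
  · intro B hB
    simp only [Finset.mem_filter, Finset.mem_powerset] at hB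
    exact Finset.insert_erase hB.1.2
  · intro C hC
    rw [Finset.mem_powersetCard] at hC
    exact Finset.erase_insert (fun h => (Finset.mem_erase.1 (hC.1 h)).1 rfl)

def G : ℕ → ℕ → ℕ
  | 0, 0 => 1
  | 0, _ + 1 => 0
  | _ + 1, 0 => 0
  | m + 1, j + 1 => ∑ t ∈ Finset.range (m + 1), (m.choose t) * fodd (t + 1) * G (m - t) j

lemma G_succ_succ (m j : ℕ) :
    G (m + 1) (j + 1) = ∑ t ∈ Finset.range (m + 1), (m.choose t) * fodd (t + 1) * G (m - t) j :=
  rfl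

lemma gpart_eq_G : ∀ (m : ℕ) (s : Finset α) (j : ℕ), s.card = m → gpart s j = G m j := by
  intro m
  induction m using Nat.strong_induction_on with
  | _ m IH =>
    intro s j hs
    rcases Nat.eq_zero_or_pos m with rfl | hm
    · rw [Finset.card_eq_zero] at hs
      subst hs
      rw [gpart_empty]
      cases j with
      | zero => rw [if_pos rfl]; rfl
      | succ j => rw [if_neg (by omega)]; rfl
    · have hne : s.Nonempty := Finset.card_pos.1 (hs ▸ hm)
      match j with
      | 0 =>
        rw [gpart_zero hne]
        obtain ⟨m', rfl⟩ : ∃ m', m = m' + 1 := ⟨m - 1, by omega⟩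
        rfl
      | j + 1 =>
        obtain ⟨m', rfl⟩ : ∃ m', m = m' + 1 := ⟨m - 1, by omega⟩
        rw [gpart_rec s hne j]
        set x := s.max' hne with hxdef
        have hxs : x ∈ s := s.max'_mem hne
        have hterm : ∀ B ∈ s.powerset.filter (fun B => x ∈ B),
            wB B * gpart (s \ B) j = fodd B.card * G (m' + 1 - B.card) j := by
          intro B hB
          simp only [Finset.mem_filter, Finset.mem_powerset] at hB
          have hBne : B.Nonempty := ⟨x, hB.2⟩
          have hBpos : 1 ≤ B.card := Finset.card_pos.2 hBne
          have hcard : (s \ B).card = m' + 1 - B.card := by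
            rw [Finset.card_sdiff_of_subset hB.1, hs]
          rw [wB_eq_fodd hBne, IH _ (by omega) _ _ hcard]
        rw [Finset.sum_congr rfl hterm]
        have hmaps2 : ∀ B ∈ s.powerset.filter (fun B => x ∈ B),
            B.card ∈ Finset.range (m' + 2) := by
          intro B hB
          simp only [Finset.mem_filter, Finset.mem_powerset] at hB
          rw [Finset.mem_range]
          have := Finset.card_le_card hB.1
          omega
        rw [← Finset.sum_fiberwise_of_maps_to hmaps2
          (fun B => fodd B.card * G (m' + 1 - B.card) j)]
        have hinner : ∀ c ∈ Finset.range (m' + 2),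
            (∑ B ∈ (s.powerset.filter (fun B => x ∈ B)).filter (fun B => B.card = c),
              fodd B.card * G (m' + 1 - B.card) j)
            = ((s.powerset.filter (fun B => x ∈ B)).filter (fun B => B.card = c)).card
              * (fodd c * G (m' + 1 - c) j) := by
          intro c _
          rw [Finset.sum_congr rfl (fun B hB => ?_), Finset.sum_const, smul_eq_mul]
          rw [Finset.mem_filter] at hB
          rw [hB.2]
        rw [Finset.sum_congr rfl hinner, Finset.sum_range_succ', G_succ_succ]
        have hz : ((s.powerset.filter (fun B => x ∈ B)).filter (fun B => B.card = 0)).card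
            * (fodd 0 * G (m' + 1 - 0) j) = 0 := by
          rw [show fodd 0 = 0 from rfl]
          ring
        rw [hz, add_zero]
        refine Finset.sum_congr rfl fun t ht => ?_
        rw [count_sets hxs t, hs]
        rw [show m' + 1 - 1 = m' from rfl, show m' + 1 - (t + 1) = m' - t from by omega]
        ring

section Main

variable (α)

/-- the property of partitions appearing in the theorem -/
def PProp (j : ℕ) (P : Finpartition (Finset.univ : Finset α)) : Prop :=
  P.parts.card = j ∧ ∀ B ∈ P.parts, Odd B.card

/-- involutions attached to a block -/
def IB (B : Finset α) : Type _ :=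
  {f : Equiv.Perm α // f * f = 1 ∧ ∀ x, f x ≠ x ↔ x ∈ B ∧ (x : WithBot α) ≠ B.max}

variable {α}

noncomputable instance (B : Finset α) : Fintype (IB α B) := by
  unfold IB
  classical
  infer_instance

noncomputable instance (j : ℕ) : DecidablePred (PProp α j) := Classical.decPred _

lemma card_IB (B : Finset α) : Fintype.card (IB α B) = invc (noMax B) := by
  rw [invc_eq_fintype]
  refine Fintype.card_congr (Equiv.subtypeEquivRight fun f => ?_)
  refine and_congr_right fun _ => forall_congr' fun x => ?_
  rw [noMax, Finset.mem_filter]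

/-- the main structural equivalence -/
noncomputable def complexEquiv (j : ℕ) :
    {PST : Finpartition (Finset.univ : Finset α) ×
        (Finset α → Equiv.Perm α) × (Finset α → Equiv.Perm α) //
      PST.1.parts.card = j ∧
      (∀ B ∈ PST.1.parts, Odd B.card) ∧
      (∀ B, B ∉ PST.1.parts → PST.2.1 B = 1 ∧ PST.2.2 B = 1) ∧
      (∀ B ∈ PST.1.parts,
        PST.2.1 B * PST.2.1 B = 1 ∧ PST.2.2 B * PST.2.2 B = 1 ∧
        (∀ x, PST.2.1 B x ≠ x ↔ x ∈ B ∧ (x : WithBot α) ≠ B.max) ∧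
        (∀ x, PST.2.2 B x ≠ x ↔ x ∈ B ∧ (x : WithBot α) ≠ B.max))} ≃
    Σ P : {P : Finpartition (Finset.univ : Finset α) // PProp α j P},
      (B : {B // B ∈ P.1.parts}) → IB α B.1 × IB α B.1 where
  toFun z :=
    ⟨⟨z.1.1, z.2.1, z.2.2.1⟩, fun B =>
      (⟨z.1.2.1 B.1, (z.2.2.2.2 B.1 B.2).1, (z.2.2.2.2 B.1 B.2).2.2.1⟩,
       ⟨z.1.2.2 B.1, (z.2.2.2.2 B.1 B.2).2.1, (z.2.2.2.2 B.1 B.2).2.2.2⟩)⟩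
  invFun w := by
    classical
    refine ⟨(w.1.1,
      fun B => if h : B ∈ w.1.1.parts then ((w.2 ⟨B, h⟩).1 : IB α B).1 else 1,
      fun B => if h : B ∈ w.1.1.parts then ((w.2 ⟨B, h⟩).2 : IB α B).1 else 1),
      w.1.2.1, w.1.2.2, ?_, ?_⟩
    · intro B hB
      dsimp only at hB ⊢
      rw [dif_neg hB, dif_neg hB]
      exact ⟨rfl, rfl⟩
    · intro B hB
      dsimp only at hB ⊢
      rw [dif_pos hB, dif_pos hB]
      exact ⟨(w.2 ⟨B, hB⟩).1.2.1, (w.2 ⟨B, hB⟩).2.2.1,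
        (w.2 ⟨B, hB⟩).1.2.2, (w.2 ⟨B, hB⟩).2.2.2⟩
  left_inv z := by
    classical
    apply Subtype.ext
    refine Prod.ext rfl (Prod.ext ?_ ?_) <;> funext B <;> by_cases h : B ∈ z.1.1.parts
    · exact dif_pos h
    · exact (dif_neg h).trans (z.2.2.2.1 B h).1.symm
    · exact dif_pos h
    · exact (dif_neg h).trans (z.2.2.2.1 B h).2.symm
  right_inv w := by
    classical
    refine Sigma.ext rfl (heq_of_eq ?_)
    funext B
    refine Prod.ext (Subtype.ext ?_) (Subtype.ext ?_) <;>
      exact dif_pos B.2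

lemma card_complexes (j : ℕ) :
    Nat.card {PST : Finpartition (Finset.univ : Finset α) ×
        (Finset α → Equiv.Perm α) × (Finset α → Equiv.Perm α) //
      PST.1.parts.card = j ∧
      (∀ B ∈ PST.1.parts, Odd B.card) ∧
      (∀ B, B ∉ PST.1.parts → PST.2.1 B = 1 ∧ PST.2.2 B = 1) ∧
      (∀ B ∈ PST.1.parts,
        PST.2.1 B * PST.2.1 B = 1 ∧ PST.2.2 B * PST.2.2 B = 1 ∧
        (∀ x, PST.2.1 B x ≠ x ↔ x ∈ B ∧ (x : WithBot α) ≠ B.max) ∧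
        (∀ x, PST.2.2 B x ≠ x ↔ x ∈ B ∧ (x : WithBot α) ≠ B.max))}
    = gpart (Finset.univ : Finset α) j := by
  classical
  rw [Nat.card_eq_fintype_card, Fintype.card_congr (complexEquiv j), Fintype.card_sigma]
  have hterm : ∀ P : {P : Finpartition (Finset.univ : Finset α) // PProp α j P},
      Fintype.card ((B : {B // B ∈ P.1.parts}) → IB α B.1 × IB α B.1)
        = ∏ B ∈ P.1.parts, wB B := by
    intro P
    rw [Fintype.card_pi]
    rw [← Finset.prod_attach P.1.parts (fun B => wB B)]
    refine Finset.prod_congr rfl fun B _ => ?_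
    rw [Fintype.card_prod, card_IB, wB, pow_two]
  rw [Finset.sum_congr rfl (fun P _ => hterm P)]
  rw [gpart]
  rw [← Finset.sum_subtype (p := PProp α j) (univ.filter (PProp α j)) (by simp)
    (fun P => ∏ B ∈ P.parts, wB B)]
  rw [Finset.sum_filter]
  refine Finset.sum_congr rfl fun P _ => ?_
  by_cases hcard : P.parts.card = j
  · by_cases hodd : ∀ B ∈ P.parts, Odd B.card
    · rw [if_pos ⟨hcard, hodd⟩, if_pos hcard]
    · rw [if_neg (fun h => hodd h.2), if_pos hcard]
      push_neg at hodd
      obtain ⟨B0, hB0, hB0e⟩ := hodd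
      refine (Finset.prod_eq_zero hB0 ?_).symm
      have hB0ne : B0.Nonempty := P.nonempty_of_mem_parts hB0
      have hc1 : 1 ≤ B0.card := Finset.card_pos.2 hB0ne
      have hcond : ¬ Even (B0.card - 1) := by
        intro he
        rw [Nat.even_sub hc1, Nat.even_iff, Nat.even_iff] at he
        rw [Nat.odd_iff] at hB0e
        omega
      rw [wB, invc_formula (noMax B0).card _ rfl, card_noMax hB0ne, if_neg hcond]
      norm_num
  · rw [if_neg (fun h => hcard h.1), if_neg hcard]

end Main

end Gpart

section Numeric

open PowerSeries

lemma fodd_step (m : ℕ) : fodd (m + 2) = m ^ 2 * fodd m := by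
  unfold fodd
  by_cases h : Odd m
  · rw [if_pos (by rcases h with ⟨r, hr⟩; exact ⟨r + 1, by omega⟩), if_pos h]
    have hm1 : 1 ≤ m := h.pos
    have h1 : m + 2 - 2 = m := by omega
    rw [h1]
    have h2 : m‼ = m * (m - 2)‼ := by
      have h3 := Nat.doubleFactorial_add_one (m - 1)
      rw [show m - 1 + 1 = m by omega] at h3
      rw [h3, show m - 1 - 1 = m - 2 from by omega]
    rw [h2, mul_pow]
  · rw [if_neg (fun hc => h (by rcases hc with ⟨r, hr⟩; exact ⟨r - 1, by omega⟩)),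
      if_neg h, mul_zero]

lemma G_zero (m : ℕ) : G m 0 = if m = 0 then 1 else 0 := by
  cases m <;> rfl

lemma G_one (m : ℕ) : G m 1 = fodd m := by
  cases m with
  | zero => simp [G, fodd]
  | succ m =>
    rw [G_succ_succ]
    rw [Finset.sum_eq_single m]
    · simp [G_zero]
    · intro t ht hne
      rw [G_zero, if_neg (by simp at ht; omega), mul_zero]
    · intro h
      simp at h

lemma G_zero_of_lt : ∀ j m, m < j → G m j = 0 := by
  intro j
  induction j with
  | zero => omega
  | succ j IH =>
    intro m hm
    cases m with
    | zero => rfl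
    | succ m =>
      rw [G_succ_succ]
      refine Finset.sum_eq_zero fun t ht => ?_
      rw [IH (m - t) (by omega), mul_zero]

noncomputable def Bps (j : ℕ) : ℚ⟦X⟧ := PowerSeries.mk fun m => (G m j : ℚ) / m.factorial

noncomputable def Cps : ℚ⟦X⟧ := d⁄dX ℚ (Bps 1)

lemma coeff_Bps (j m : ℕ) : (PowerSeries.coeff (R := ℚ) m) (Bps j) = (G m j : ℚ) / m.factorial := PowerSeries.coeff_mk m _

lemma coeff_Cps (m : ℕ) : (PowerSeries.coeff (R := ℚ) m) Cps = (fodd (m + 1) : ℚ) / m.factorial := by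
  rw [Cps, PowerSeries.coeff_derivative, coeff_Bps, G_one]
  have h1 : ((m + 1).factorial : ℚ) = (m + 1) * m.factorial := by
    rw [Nat.factorial_succ]; push_cast; ring
  rw [h1]
  have h2 : (m.factorial : ℚ) ≠ 0 := Nat.cast_ne_zero.2 (Nat.factorial_ne_zero m)
  have h3 : ((m : ℚ) + 1) ≠ 0 := by positivity
  field_simp

lemma fac_succ_q (m : ℕ) : ((m + 1).factorial : ℚ) = ((m : ℚ) + 1) * m.factorial := by
  rw [Nat.factorial_succ]; push_cast; ring

lemma fac_ne (m : ℕ) : (m.factorial : ℚ) ≠ 0 := Nat.cast_ne_zero.2 (Nat.factorial_ne_zero m)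

lemma deriv_Bps (j : ℕ) : d⁄dX ℚ (Bps (j + 1)) = Cps * Bps j := by
  ext m
  rw [PowerSeries.coeff_derivative, coeff_Bps, PowerSeries.coeff_mul,
    Finset.Nat.sum_antidiagonal_eq_sum_range_succ
      (fun p q => (PowerSeries.coeff (R := ℚ) p) Cps * (PowerSeries.coeff (R := ℚ) q) (Bps j)), G_succ_succ]
  push_cast [Finset.sum_div]
  rw [Finset.sum_mul]
  refine Finset.sum_congr rfl fun t ht => ?_
  rw [coeff_Cps, coeff_Bps]
  have htm : t ≤ m := by
    simp only [Finset.mem_range] at ht; omega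
  rw [Nat.cast_choose ℚ htm, fac_succ_q]
  have h1 := fac_ne m
  have h2 := fac_ne t
  have h3 := fac_ne (m - t)
  have h4 : ((m : ℚ) + 1) ≠ 0 := by positivity
  field_simp

lemma Cps_ode : d⁄dX ℚ Cps = PowerSeries.X * Cps + PowerSeries.X ^ 2 * d⁄dX ℚ Cps := by
  ext m
  rw [pow_two, mul_assoc]
  rw [map_add]
  match m with
  | 0 =>
    rw [PowerSeries.coeff_zero_X_mul, PowerSeries.coeff_zero_X_mul, PowerSeries.coeff_derivative, coeff_Cps]
    norm_num [fodd]
  | 1 =>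
    simp only [PowerSeries.coeff_succ_X_mul, PowerSeries.coeff_zero_X_mul, PowerSeries.coeff_derivative, coeff_Cps]
    norm_num [fodd, Nat.doubleFactorial, show Odd 3 from by decide, show Odd 1 from by decide]
  | (m + 2) =>
    simp only [PowerSeries.coeff_succ_X_mul, PowerSeries.coeff_derivative, coeff_Cps]
    rw [show m + 1 + 2 + 1 = m + 2 + 2 from rfl, fodd_step (m + 2),
      show m + 1 + 1 = m + 2 from rfl]
    rw [show m + 1 + 2 = m + 2 + 1 from rfl, fac_succ_q (m + 2), fac_succ_q (m + 1)]
    have h1 := fac_ne m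
    have h2 : ((m : ℚ) + 1) ≠ 0 := by positivity
    have h3 : ((m : ℚ) + 2) ≠ 0 := by positivity
    push_cast
    field_simp
    ring

lemma Cps_key : (1 - PowerSeries.X ^ 2 : ℚ⟦X⟧) * d⁄dX ℚ Cps = PowerSeries.X * Cps := by
  linear_combination Cps_ode

lemma constantCoeff_Cps : PowerSeries.constantCoeff (R := ℚ) Cps = 1 := by
  rw [← PowerSeries.coeff_zero_eq_constantCoeff, coeff_Cps]
  norm_num [fodd]

lemma Cps_one : (1 - PowerSeries.X ^ 2 : ℚ⟦X⟧) * (Cps * Cps) = 1 := by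
  have hd2 : d⁄dX ℚ (1 - PowerSeries.X ^ 2 : ℚ⟦X⟧) = -(2 * PowerSeries.X) := by
    rw [map_sub, Derivation.map_one_eq_zero, pow_two, Derivation.leibniz, PowerSeries.derivative_X]
    simp only [smul_eq_mul]
    ring
  refine PowerSeries.derivative.ext ?_ ?_
  · rw [Derivation.map_one_eq_zero, Derivation.leibniz, Derivation.leibniz, hd2]
    simp only [smul_eq_mul]
    linear_combination (2 * Cps) * Cps_key
  · rw [map_mul, map_mul, map_sub, map_one, map_pow, PowerSeries.constantCoeff_X, constantCoeff_Cps]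
    norm_num

lemma Bps_ode (j : ℕ) :
    (1 - PowerSeries.X ^ 2 : ℚ⟦X⟧) * d⁄dX ℚ (d⁄dX ℚ (Bps (j + 2))) =
      PowerSeries.X * d⁄dX ℚ (Bps (j + 2)) + Bps j := by
  have h1 : d⁄dX ℚ (Bps (j + 2)) = Cps * Bps (j + 1) := deriv_Bps (j + 1)
  rw [h1, Derivation.leibniz, deriv_Bps j]
  simp only [smul_eq_mul]
  linear_combination Bps j * Cps_one + Bps (j + 1) * Cps_key

lemma hB' (j r : ℕ) : (G r j : ℚ) = PowerSeries.coeff (R := ℚ) r (Bps j) * r.factorial := by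
  rw [coeff_Bps, div_mul_cancel₀ _ (fac_ne r)]

lemma coeff_deriv_fac (F : ℚ⟦X⟧) (r : ℕ) :
    PowerSeries.coeff (R := ℚ) (r + 1) F * ((r + 1).factorial : ℚ) = PowerSeries.coeff (R := ℚ) r (d⁄dX ℚ F) * r.factorial := by
  rw [PowerSeries.coeff_derivative, fac_succ_q]
  ring

lemma hdB' (j r : ℕ) : (G (r + 1) j : ℚ) = PowerSeries.coeff (R := ℚ) r (d⁄dX ℚ (Bps j)) * r.factorial := by
  rw [hB' j (r + 1), coeff_deriv_fac]

lemma hdd' (j r : ℕ) :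
    (G (r + 2) j : ℚ) = PowerSeries.coeff (R := ℚ) r (d⁄dX ℚ (d⁄dX ℚ (Bps j))) * r.factorial := by
  have h1 : (G (r + 1 + 1) j : ℚ)
      = PowerSeries.coeff (R := ℚ) (r + 1) (d⁄dX ℚ (Bps j)) * ((r + 1).factorial : ℚ) := hdB' j (r + 1)
  rw [show r + 2 = r + 1 + 1 from rfl, h1, coeff_deriv_fac]

lemma G_rec2 (m j : ℕ) : G (m + 2) (j + 2) = m ^ 2 * G m (j + 2) + G m j := by
  have h := Bps_ode j
  rw [sub_mul, one_mul, pow_two, mul_assoc] at h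
  have key : (G (m + 2) (j + 2) : ℚ) = (m : ℚ) ^ 2 * G m (j + 2) + G m j := by
    match m with
    | 0 =>
      have hc := congrArg (PowerSeries.coeff (R := ℚ) 0) h
      rw [map_sub, map_add, PowerSeries.coeff_zero_X_mul, PowerSeries.coeff_zero_X_mul] at hc
      rw [hdd' (j + 2) 0, hB' j 0]
      push_cast
      norm_num [Nat.factorial] at hc ⊢
      linarith [hc]
    | 1 =>
      have hc := congrArg (PowerSeries.coeff (R := ℚ) 1) h
      rw [map_sub, map_add, PowerSeries.coeff_succ_X_mul, PowerSeries.coeff_succ_X_mul, PowerSeries.coeff_zero_X_mul] at hc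
      have h1 : (G 1 (j + 2) : ℚ)
          = PowerSeries.coeff (R := ℚ) 0 (d⁄dX ℚ (Bps (j + 2))) * ((0:ℕ).factorial : ℚ) := hdB' (j + 2) 0
      rw [hdd' (j + 2) 1, hB' j 1, h1]
      push_cast
      norm_num [Nat.factorial] at hc ⊢
      linarith [hc]
    | (m + 2) =>
      have hc := congrArg (PowerSeries.coeff (R := ℚ) (m + 2)) h
      rw [map_sub, map_add, PowerSeries.coeff_succ_X_mul, PowerSeries.coeff_succ_X_mul, PowerSeries.coeff_succ_X_mul] at hc
      have h3 : (G (m + 2) (j + 2) : ℚ)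
          = PowerSeries.coeff (R := ℚ) m (d⁄dX ℚ (d⁄dX ℚ (Bps (j + 2)))) * m.factorial := hdd' (j + 2) m
      have hcc : PowerSeries.coeff (R := ℚ) (m + 1) (d⁄dX ℚ (Bps (j + 2))) * ((m + 1).factorial : ℚ)
          = PowerSeries.coeff (R := ℚ) m (d⁄dX ℚ (d⁄dX ℚ (Bps (j + 2)))) * m.factorial := by
        rw [← h3]
        exact (hdB' (j + 2) (m + 1)).symm
      have h4 : (G (m + 2 + 2) (j + 2) : ℚ)
          = PowerSeries.coeff (R := ℚ) (m + 2) (d⁄dX ℚ (d⁄dX ℚ (Bps (j + 2)))) * ((m + 2).factorial : ℚ) :=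
        hdd' (j + 2) (m + 2)
      have hc' : PowerSeries.coeff (R := ℚ) (m + 2) (d⁄dX ℚ (d⁄dX ℚ (Bps (j + 2))))
          = PowerSeries.coeff (R := ℚ) m (d⁄dX ℚ (d⁄dX ℚ (Bps (j + 2))))
            + PowerSeries.coeff (R := ℚ) (m + 1) (d⁄dX ℚ (Bps (j + 2))) + PowerSeries.coeff (R := ℚ) (m + 2) (Bps j) := by
        linarith [hc]
      rw [h4, hB' j (m + 2), h3, hc']
      rw [show ((m + 2 : ℕ)).factorial = ((m + 1) + 1).factorial from rfl,
        fac_succ_q (m + 1), fac_succ_q m] at *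
      push_cast at hcc ⊢
      linear_combination ((m : ℚ) + 2) * hcc
  exact_mod_cast key

lemma v_zero_of_gt : ∀ n k, n < k → v n k = 0 := by
  intro n
  induction n with
  | zero =>
    intro k hk
    match k, hk with
    | k + 1, _ => rfl
  | succ n IH =>
    intro k hk
    match k, hk with
    | k + 1, hk =>
      show v n k - (2 * (n : ℤ) + 1) ^ 2 * v n (k + 1) = 0
      rw [IH k (by omega), IH (k + 1) (by omega)]
      ring

lemma v_eq (n : ℕ) : ∀ k, k ≤ n → v n k = (-1 : ℤ) ^ (n - k) * (G (2 * n + 1) (2 * k + 1) : ℤ) := by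
  induction n with
  | zero =>
    intro k hk
    interval_cases k
    show (1 : ℤ) = (-1) ^ 0 * (G 1 1 : ℤ)
    rw [G_one]
    norm_num [fodd]
  | succ n IH =>
    intro k hk
    match k with
    | 0 =>
      show -(2 * (n : ℤ) + 1) ^ 2 * v n 0 = _
      rw [IH 0 (Nat.zero_le n)]
      have hG : G (2 * (n + 1) + 1) 1 = (2 * n + 1) ^ 2 * G (2 * n + 1) 1 := by
        rw [G_one, G_one, show 2 * (n + 1) + 1 = (2 * n + 1) + 2 from by ring, fodd_step]
      rw [hG]
      have h1 : n + 1 - 0 = (n - 0) + 1 := by omega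
      rw [h1]
      push_cast
      ring
    | k + 1 =>
      have hk' : k ≤ n := by omega
      show v n k - (2 * (n : ℤ) + 1) ^ 2 * v n (k + 1) = _
      have hG : G (2 * (n + 1) + 1) (2 * (k + 1) + 1)
          = (2 * n + 1) ^ 2 * G (2 * n + 1) (2 * (k + 1) + 1) + G (2 * n + 1) (2 * k + 1) := by
        rw [show 2 * (n + 1) + 1 = (2 * n + 1) + 2 from by ring,
          show 2 * (k + 1) + 1 = (2 * k + 1) + 2 from by ring]
        exact G_rec2 (2 * n + 1) (2 * k + 1)
      rw [hG, IH k hk']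
      rcases Nat.lt_or_ge k n with hlt | hge
      · rw [IH (k + 1) (by omega)]
        obtain ⟨d, hd⟩ : ∃ d, n - k = d + 1 := ⟨n - k - 1, by omega⟩
        rw [show n + 1 - (k + 1) = n - k from by omega, hd,
          show n - (k + 1) = d from by omega]
        push_cast
        ring
      · have hkn : k = n := by omega
        subst hkn
        rw [v_zero_of_gt k (k + 1) (by omega),
          G_zero_of_lt (2 * (k + 1) + 1) (2 * k + 1) (by omega)]
        simp
lemma v_natAbs (n k : ℕ) (h : k ≤ n) : (v n k).natAbs = G (2 * n + 1) (2 * k + 1) := by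
  rw [v_eq n k h]
  rw [Int.natAbs_mul, Int.natAbs_pow]
  simp

end Numeric

end Aux

/-- `|v n k|` is the number of `(n,k)`-Riordan complexes: a set partition of `{1,…,2n+1}`
into `2k+1` blocks of odd cardinality together with, for each block `B`, an ordered pair
of fixed-point-free involutions on `B \ {max B}` (modelled as permutations of the whole
ground set whose non-fixed points are exactly `B \ {max B}`, assigned by two functions
that are the identity off the blocks of the partition). -/
theorem stmt19 (n k : ℕ) (hkn : k ≤ n) :
    (v n k).natAbs = Nat.card
      {PST : Finpartition (Finset.univ : Finset (Fin (2 * n + 1))) ×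
          (Finset (Fin (2 * n + 1)) → Equiv.Perm (Fin (2 * n + 1))) ×
          (Finset (Fin (2 * n + 1)) → Equiv.Perm (Fin (2 * n + 1))) //
        PST.1.parts.card = 2 * k + 1 ∧
        (∀ B ∈ PST.1.parts, Odd B.card) ∧
        (∀ B, B ∉ PST.1.parts → PST.2.1 B = 1 ∧ PST.2.2 B = 1) ∧
        (∀ B ∈ PST.1.parts,
          PST.2.1 B * PST.2.1 B = 1 ∧ PST.2.2 B * PST.2.2 B = 1 ∧
          (∀ x, PST.2.1 B x ≠ x ↔ x ∈ B ∧ (x : WithBot (Fin (2 * n + 1))) ≠ B.max) ∧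
          (∀ x, PST.2.2 B x ≠ x ↔ x ∈ B ∧ (x : WithBot (Fin (2 * n + 1))) ≠ B.max))} := by
  have h2 : (Finset.univ : Finset (Fin (2 * n + 1))).card = 2 * n + 1 := by
    rw [Finset.card_univ, Fintype.card_fin]
  calc (v n k).natAbs = G (2 * n + 1) (2 * k + 1) := v_natAbs n k hkn
    _ = gpart (Finset.univ : Finset (Fin (2 * n + 1))) (2 * k + 1) :=
        (gpart_eq_G (2 * n + 1) _ _ h2).symm
    _ = _ := (card_complexes (2 * k + 1)).symm
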